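/- In every pure Nash equilibrium of the Mod-Cut&Choose mechanism for two agents, the resulting allocation gives each agent i value at least her maximin share μ_i(2, M), with respect to the true additive valuations. -/

import Mathlib

open Finset

/-- The goods sorted in decreasing order of agent 1's true values, ties broken
lexicographically. -/
noncomputable def sortedGoods {m : ℕ} (v1 : Fin m → ℝ) : List (Fin m) :=
  (List.finRange m).mergeSort
    (fun g h => @decide (v1 h < v1 g ∨ (v1 g = v1 h ∧ g ≤ h)) (Classical.propDecidable _))

/-- The cut phase of Mod-Cut&Choose: goods are processed in decreasing order of agent 1's
true values `v1` (ties lexicographic) and each good is added to the bundle with the smaller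
total reported bid `b1` (ties in favor of the first bundle). -/
noncomputable def cutPhase {m : ℕ} (v1 b1 : Fin m → ℝ) : Finset (Fin m) × Finset (Fin m) :=
  (sortedGoods v1).foldl
    (fun E g =>
      if ∑ x ∈ E.1, b1 x ≤ ∑ x ∈ E.2, b1 x then (insert g E.1, E.2) else (E.1, insert g E.2))
    (∅, ∅)

/-- The Mod-Cut&Choose mechanism: after the cut phase, agent 2 receives the bundle with the
larger total bid `b2` (ties in favor of the first bundle) and agent 1 receives the other
bundle. The output is the pair (bundle of agent 1, bundle of agent 2). -/
noncomputable def modCC {m : ℕ} (v1 b1 b2 : Fin m → ℝ) : Finset (Fin m) × Finset (Fin m) :=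
  let E := cutPhase v1 b1
  if ∑ x ∈ E.2, b2 x ≤ ∑ x ∈ E.1, b2 x then (E.2, E.1) else (E.1, E.2)

/-- The maximin share for two agents: maximum over bipartitions of all goods of the
minimum of the two bundle values. -/
noncomputable def mms2 {m : ℕ} (v : Fin m → ℝ) : ℝ :=
  sSup {x : ℝ | ∃ S : Finset (Fin m), x = min (∑ g ∈ S, v g) (∑ g ∈ Sᶜ, v g)}

/-! ### Auxiliary lemmas -/

/-- The sorted list is a permutation of all goods. -/
lemma sortedGoods_perm {m : ℕ} (v1 : Fin m → ℝ) :
    List.Perm (sortedGoods v1) (List.finRange m) :=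
  List.mergeSort_perm _ _

lemma sortedGoods_nodup {m : ℕ} (v1 : Fin m → ℝ) : (sortedGoods v1).Nodup :=
  (sortedGoods_perm v1).nodup_iff.mpr (List.nodup_finRange m)

lemma sortedGoods_toFinset {m : ℕ} (v1 : Fin m → ℝ) :
    (sortedGoods v1).toFinset = Finset.univ := by
  rw [List.toFinset_eq_of_perm _ _ (sortedGoods_perm v1)]
  exact List.toFinset_finRange m

/-- The two bundles produced by the fold cover all processed goods. -/
lemma foldl_union {m : ℕ} (b : Fin m → ℝ) :
    ∀ (l : List (Fin m)) (E : Finset (Fin m) × Finset (Fin m)),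
      (l.foldl
        (fun E g =>
          if ∑ x ∈ E.1, b x ≤ ∑ x ∈ E.2, b x then (insert g E.1, E.2) else (E.1, insert g E.2))
        E).1 ∪
      (l.foldl
        (fun E g =>
          if ∑ x ∈ E.1, b x ≤ ∑ x ∈ E.2, b x then (insert g E.1, E.2) else (E.1, insert g E.2))
        E).2 = E.1 ∪ E.2 ∪ l.toFinset := by
  intro l
  induction l with
  | nil => intro E; simp
  | cons g t ih =>
    intro E
    rw [List.foldl_cons, ih]
    by_cases h : ∑ x ∈ E.1, b x ≤ ∑ x ∈ E.2, b x
    · rw [if_pos h]; ext x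
      simp only [Finset.mem_union, Finset.mem_insert, List.toFinset_cons, List.mem_toFinset]
      tauto
    · rw [if_neg h]; ext x
      simp only [Finset.mem_union, Finset.mem_insert, List.toFinset_cons, List.mem_toFinset]
      tauto

/-- Pointwise congruence for `Chain'`. -/
lemma chain'_congr_aux {α : Type*} {R R' : α → α → Prop} :
    ∀ l : List α, (∀ x ∈ l, ∀ y ∈ l, R x y → R' x y) → l.Chain' R → l.Chain' R' := by
  intro l h hc
  unfold List.Chain' at hc ⊢
  rw [List.isChain_iff_getElem] at hc ⊢
  intro i hi
  exact h _ (l.getElem_mem _) _ (l.getElem_mem _) (hc i hi)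

/-- Existence of an adapted bid for a target bundle `S`: consecutive goods get bid 1 when
the desired side changes and 0 otherwise. -/
lemma exists_adapted_bid {m : ℕ} (S : Finset (Fin m)) :
    ∀ l : List (Fin m), l.Nodup →
      ∃ b : Fin m → ℝ, (∀ g, 0 ≤ b g) ∧
        l.Chain' (fun g h => b g = if (g ∈ S ↔ h ∈ S) then 0 else 1) := by
  intro l
  induction l with
  | nil => exact fun _ => ⟨0, fun _ => le_refl _, List.isChain_nil⟩
  | cons g t ih =>
    intro hnd
    obtain ⟨b, hb0, hbc⟩ := ih (List.nodup_cons.mp hnd).2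
    match t with
    | [] => exact ⟨b, hb0, List.isChain_singleton _⟩
    | h :: t' =>
      refine ⟨Function.update b g (if (g ∈ S ↔ h ∈ S) then 0 else 1), ?_, ?_⟩
      · intro x
        rcases eq_or_ne x g with rfl | hx
        · rw [Function.update_self]; split <;> norm_num
        · rw [Function.update_of_ne hx]; exact hb0 x
      · unfold List.Chain'; rw [List.isChain_cons_cons]
        constructor
        · rw [Function.update_self]
        · refine chain'_congr_aux _ ?_ hbc
          intro x hx y _ hxy
          have hxg : x ≠ g := by
            rintro rfl
            exact (List.nodup_cons.mp hnd).1 hx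
          rw [Function.update_of_ne hxg]
          exact hxy

/-- The forcing lemma: with an adapted bid, the greedy cut phase produces exactly the
partition (S-part, complement part) of the processed goods. -/
lemma forcing {m : ℕ} (S : Finset (Fin m)) (b : Fin m → ℝ) :
    ∀ (l : List (Fin m)) (E1 E2 : Finset (Fin m)),
      l.Nodup →
      (∀ g ∈ l, g ∉ E1 ∧ g ∉ E2) →
      l.Chain' (fun g h => b g = if (g ∈ S ↔ h ∈ S) then 0 else 1) →
      (∀ g, l.head? = some g →
        if g ∈ S then (∑ x ∈ E1, b x = ∑ x ∈ E2, b x)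
        else (∑ x ∈ E1, b x = ∑ x ∈ E2, b x + 1)) →
      l.foldl
        (fun E g =>
          if ∑ x ∈ E.1, b x ≤ ∑ x ∈ E.2, b x then (insert g E.1, E.2) else (E.1, insert g E.2))
        (E1, E2) =
        (E1 ∪ l.toFinset.filter (· ∈ S), E2 ∪ l.toFinset.filter (· ∉ S)) := by
  intro l
  induction l with
  | nil => intro E1 E2 _ _ _ _; simp
  | cons g t ih =>
    intro E1 E2 hnd hfresh hchain hhead
    have hgE1 : g ∉ E1 := (hfresh g (List.mem_cons_self)).1
    have hgE2 : g ∉ E2 := (hfresh g (List.mem_cons_self)).2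
    have hhd := hhead g rfl
    rw [List.foldl_cons]
    by_cases hgS : g ∈ S
    · -- g goes to the first bundle
      rw [if_pos hgS] at hhd
      have hcond : ∑ x ∈ E1, b x ≤ ∑ x ∈ E2, b x := le_of_eq hhd
      rw [if_pos hcond]
      have hstep := ih (insert g E1) E2 (List.nodup_cons.mp hnd).2
        (by
          intro x hx
          have hxg : x ≠ g := by
            rintro rfl; exact (List.nodup_cons.mp hnd).1 hx
          have := hfresh x (List.mem_cons_of_mem g hx)
          exact ⟨by simp [Finset.mem_insert, hxg, this.1], this.2⟩)
        hchain.tail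
        (by
          intro h hh
          match t, hh with
          | h :: t', rfl =>
            have hrel : b g = if (g ∈ S ↔ h ∈ S) then 0 else 1 :=
              (List.isChain_cons_cons.mp hchain).1
            have hsum : ∑ x ∈ insert g E1, b x = b g + ∑ x ∈ E1, b x :=
              Finset.sum_insert hgE1
            by_cases hhS : h ∈ S
            · rw [if_pos hhS, hsum, hhd, hrel, if_pos (by tauto)]; ring
            · rw [if_neg hhS, hsum, hhd, hrel, if_neg (by tauto)]; ring)
      rw [hstep, Prod.mk.injEq]
      constructor
      · rw [List.toFinset_cons, Finset.filter_insert, if_pos hgS,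
          Finset.union_insert, Finset.insert_union]
      · rw [List.toFinset_cons, Finset.filter_insert, if_neg (by simp [hgS])]
    · -- g goes to the second bundle
      rw [if_neg hgS] at hhd
      have hcond : ¬ (∑ x ∈ E1, b x ≤ ∑ x ∈ E2, b x) := by
        rw [hhd]; linarith
      rw [if_neg hcond]
      have hstep := ih E1 (insert g E2) (List.nodup_cons.mp hnd).2
        (by
          intro x hx
          have hxg : x ≠ g := by
            rintro rfl; exact (List.nodup_cons.mp hnd).1 hx
          have := hfresh x (List.mem_cons_of_mem g hx)
          exact ⟨this.1, by simp [Finset.mem_insert, hxg, this.2]⟩)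
        hchain.tail
        (by
          intro h hh
          match t, hh with
          | h :: t', rfl =>
            have hrel : b g = if (g ∈ S ↔ h ∈ S) then 0 else 1 :=
              (List.isChain_cons_cons.mp hchain).1
            have hsum : ∑ x ∈ insert g E2, b x = b g + ∑ x ∈ E2, b x :=
              Finset.sum_insert hgE2
            by_cases hhS : h ∈ S
            · rw [if_pos hhS, hsum, hhd, hrel, if_neg (by tauto)]; ring
            · rw [if_neg hhS, hsum, hhd, hrel, if_pos (by tauto)]; ring)
      rw [hstep, Prod.mk.injEq]
      constructor
      · rw [List.toFinset_cons, Finset.filter_insert, if_neg (by simp [hgS])]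
      · rw [List.toFinset_cons, Finset.filter_insert, if_pos (by simp [hgS]),
          Finset.union_insert, Finset.insert_union]

/-- in every pure Nash equilibrium of Mod-Cut&Choose for two agents, each agent
receives value at least her maximin share with respect to the true valuations. -/
theorem modCC_PNE_MMS {m : ℕ} (v1 v2 b1 b2 : Fin m → ℝ)
    (hv1 : ∀ g, 0 ≤ v1 g) (hv2 : ∀ g, 0 ≤ v2 g)
    (hb1 : ∀ g, 0 ≤ b1 g) (hb2 : ∀ g, 0 ≤ b2 g)
    (hPNE1 : ∀ b1' : Fin m → ℝ, (∀ g, 0 ≤ b1' g) →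
      ∑ x ∈ (modCC v1 b1' b2).1, v1 x ≤ ∑ x ∈ (modCC v1 b1 b2).1, v1 x)
    (hPNE2 : ∀ b2' : Fin m → ℝ, (∀ g, 0 ≤ b2' g) →
      ∑ x ∈ (modCC v1 b1 b2').2, v2 x ≤ ∑ x ∈ (modCC v1 b1 b2).2, v2 x) :
    mms2 v1 ≤ ∑ x ∈ (modCC v1 b1 b2).1, v1 x ∧
    mms2 v2 ≤ ∑ x ∈ (modCC v1 b1 b2).2, v2 x := by
  classical
  have hval1 : 0 ≤ ∑ x ∈ (modCC v1 b1 b2).1, v1 x :=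
    Finset.sum_nonneg fun x _ => hv1 x
  have hval2 : 0 ≤ ∑ x ∈ (modCC v1 b1 b2).2, v2 x :=
    Finset.sum_nonneg fun x _ => hv2 x
  constructor
  · -- Agent 1: use the forcing lemma.
    apply Real.sSup_le _ hval1
    rintro x ⟨S, rfl⟩
    -- choose the side containing the head of the list (if any)
    rcases hl : sortedGoods v1 with _ | ⟨g0, t⟩
    · -- no goods: both sums are over subsets of the empty universe
      have huniv : (Finset.univ : Finset (Fin m)) = ∅ := by
        rw [← sortedGoods_toFinset v1, hl]; simp
      have hS : S = ∅ := Finset.eq_empty_of_forall_notMem fun x hx => by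
        have : x ∈ (∅ : Finset (Fin m)) := huniv ▸ Finset.mem_univ x
        simp at this
      have hSc : Sᶜ = ∅ := Finset.eq_empty_of_forall_notMem fun x hx => by
        have : x ∈ (∅ : Finset (Fin m)) := huniv ▸ Finset.mem_univ x
        simp at this
      have e1 : ∑ g ∈ S, v1 g = 0 := by rw [hS]; simp
      have e2 : ∑ g ∈ Sᶜ, v1 g = 0 := by rw [hSc]; simp
      rw [e1, e2]
      simpa using hval1
    · set T : Finset (Fin m) := if g0 ∈ S then S else Sᶜ with hT
      have hg0T : g0 ∈ T := by
        rw [hT]; split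
        · assumption
        · simp [*]
      have hmin : min (∑ g ∈ S, v1 g) (∑ g ∈ Sᶜ, v1 g)
          = min (∑ g ∈ T, v1 g) (∑ g ∈ Tᶜ, v1 g) := by
        rw [hT]; split
        · rfl
        · rw [compl_compl, min_comm]
      rw [hmin]
      obtain ⟨b, hb0, hbc⟩ := exists_adapted_bid T (sortedGoods v1) (sortedGoods_nodup v1)
      have hcut : cutPhase v1 b = (T, Tᶜ) := by
        have := forcing T b (sortedGoods v1) ∅ ∅ (sortedGoods_nodup v1)
          (fun g _ => ⟨Finset.notMem_empty g, Finset.notMem_empty g⟩) hbc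
          (by
            intro g hg
            rw [hl] at hg
            simp only [List.head?_cons, Option.some.injEq] at hg
            subst hg
            rw [if_pos hg0T])
        rw [cutPhase, this, sortedGoods_toFinset]
        congr 1
        · ext x; simp
        · ext x; simp
      -- the deviation b gives agent 1 either T or Tᶜ
      have h1 : min (∑ g ∈ T, v1 g) (∑ g ∈ Tᶜ, v1 g) ≤ ∑ x ∈ (modCC v1 b b2).1, v1 x := by
        simp only [modCC, hcut]
        split
        · exact min_le_of_right_le (le_refl _)
        · exact min_le_of_left_le (le_refl _)
      exact le_trans h1 (hPNE1 b hb0)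
  · -- Agent 2: deviate to truthful bidding.
    apply Real.sSup_le _ hval2
    rintro x ⟨S, rfl⟩
    have h2 := hPNE2 v2 hv2
    set E := cutPhase v1 b1 with hE
    have hunion : E.1 ∪ E.2 = Finset.univ := by
      have := foldl_union b1 (sortedGoods v1) (∅, ∅)
      rw [hE, cutPhase]
      rw [this, sortedGoods_toFinset]
      simp
    have htot : ∑ g, v2 g ≤ ∑ x ∈ E.1, v2 x + ∑ x ∈ E.2, v2 x := by
      have hui := Finset.sum_union_inter (s₁ := E.1) (s₂ := E.2) (f := v2)
      have hint : 0 ≤ ∑ x ∈ E.1 ∩ E.2, v2 x := Finset.sum_nonneg fun x _ => hv2 x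
      rw [hunion] at hui
      linarith
    have hdev : (∑ g, v2 g) / 2 ≤ ∑ x ∈ (modCC v1 b1 v2).2, v2 x := by
      simp only [modCC, ← hE]
      split <;> rename_i hcase
      · linarith
      · push_neg at hcase; linarith
    have hx : min (∑ g ∈ S, v2 g) (∑ g ∈ Sᶜ, v2 g) ≤ (∑ g, v2 g) / 2 := by
      have := Finset.sum_add_sum_compl S v2
      rcases min_le_iff.mpr (Or.inl (le_refl (∑ g ∈ S, v2 g))) with h
      rcases le_total (∑ g ∈ S, v2 g) (∑ g ∈ Sᶜ, v2 g) with hle | hle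
      · rw [min_eq_left hle]; linarith
      · rw [min_eq_right hle]; linarith
    linarith [le_trans hx (le_trans hdev h2)]
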